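/- Let q_u be the uniform distribution on a set of size n and let K_RR be the n-ary randomized response mechanism with diagonal entries e^ε/(e^ε + n − 1) and off-diagonal entries 1/(e^ε + n − 1). Then K_RR is row-stochastic, ε-LDP, satisfies q_u K_RR = q_u, and achieves sup_{p ∈ Δ(X)} D_f(p ‖ p K_RR) = ((n−1)/(e^ε + n − 1)) f(0) + (e^ε/(e^ε + n − 1)) f((e^ε + n − 1)/e^ε), which equals the minimax optimal utility Γ_f(q_u, ε). -/

import Mathlib

open Finset

/-- The `f`-divergence between distributions `p` and `r` on `Fin n`. -/
noncomputable def fDiv {n : ℕ} (f : ℝ → ℝ) (p r : Fin n → ℝ) : ℝ :=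
  ∑ x, r x * f (p x / r x)

/-- The output distribution `pK` of the mechanism `K` applied to `p`. -/
def push {n : ℕ} (p : Fin n → ℝ) (K : Matrix (Fin n) (Fin n) ℝ) : Fin n → ℝ :=
  fun j => ∑ i, p i * K i j

lemma push_sum {n : ℕ} (p : Fin n → ℝ) (K : Matrix (Fin n) (Fin n) ℝ)
    (hp : ∑ i, p i = 1) (hK : ∀ i, ∑ j, K i j = 1) : ∑ j, push p K j = 1 := by
  unfold push
  rw [Finset.sum_comm]
  simp_rw [← Finset.mul_sum, hK, mul_one, hp]

lemma fDiv_delta {n : ℕ} [NeZero n] (f : ℝ → ℝ) (K : Matrix (Fin n) (Fin n) ℝ)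
    (hK : ∑ j, K 0 j = 1) :
    fDiv f (fun i => if i = 0 then 1 else 0) (push (fun i => if i = 0 then 1 else 0) K)
      = K 0 0 * f (1 / K 0 0) + (1 - K 0 0) * f 0 := by
  have hpush : ∀ j, push (fun i => if i = 0 then (1:ℝ) else 0) K j = K 0 j := by
    intro j
    unfold push
    simp [ite_mul, Finset.sum_ite_eq']
  unfold fDiv
  simp_rw [hpush]
  rw [Fintype.sum_eq_add_sum_compl 0]
  have h1 : ∑ j ∈ ({0}ᶜ : Finset (Fin n)), K 0 j * f ((if j = 0 then (1:ℝ) else 0) / K 0 j)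
      = ∑ j ∈ ({0}ᶜ : Finset (Fin n)), K 0 j * f 0 := by
    refine Finset.sum_congr rfl fun j hj => ?_
    have : j ≠ 0 := by simpa using hj
    simp [this]
  rw [h1, ← Finset.sum_mul]
  have h2 : ∑ j ∈ ({0}ᶜ : Finset (Fin n)), K 0 j = 1 - K 0 0 := by
    have := Fintype.sum_eq_add_sum_compl (0 : Fin n) (fun j => K 0 j)
    rw [hK] at this
    linarith
  rw [h2]
  simp

lemma perterm (f : ℝ → ℝ) (hconv : ConvexOn ℝ (Set.Ici (0:ℝ)) f)
    (M r p : ℝ) (hM0 : 0 < M) (hr : 0 < r) (hp : 0 ≤ p) (hle : p / r ≤ M) :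
    r * f (p / r) ≤ (r - p / M) * f 0 + (p / M) * f M := by
  set t : ℝ := p / r / M with ht_def
  have hx0 : 0 ≤ p / r := div_nonneg hp hr.le
  have ht0 : 0 ≤ t := div_nonneg hx0 hM0.le
  have ht1 : t ≤ 1 := by
    rw [ht_def, div_le_one hM0]; exact hle
  have key := hconv.2 (Set.mem_Ici.mpr le_rfl) (Set.mem_Ici.mpr hM0.le)
    (by linarith : (0:ℝ) ≤ 1 - t) ht0 (by ring)
  have harg : (1 - t) • (0:ℝ) + t • M = p / r := by
    simp only [smul_eq_mul, ht_def, mul_zero, zero_mul, zero_add]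
    field_simp
  rw [harg] at key
  simp only [smul_eq_mul] at key
  have := mul_le_mul_of_nonneg_left key hr.le
  have hrt : r * t = p / M := by
    rw [ht_def]
    field_simp
  have hexp : r * ((1 - t) * f 0 + t * f M) = (r - p / M) * f 0 + (p / M) * f M := by
    rw [← hrt]; ring
  linarith

lemma converse_key (f : ℝ → ℝ) (hconv : ConvexOn ℝ (Set.Ici (0:ℝ)) f)
    (t c : ℝ) (ht : 0 < t) (htc : t ≤ c) :
    c * f (1/c) ≤ t * f (1/t) + (c - t) * f 0 := by
  have hc : 0 < c := lt_of_lt_of_le ht htc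
  have hl0 : 0 ≤ t / c := by positivity
  have hl1 : t / c ≤ 1 := (div_le_one hc).mpr htc
  have key := hconv.2 (Set.mem_Ici.mpr (by positivity : (0:ℝ) ≤ 1/t))
    (Set.mem_Ici.mpr le_rfl) hl0 (by linarith : (0:ℝ) ≤ 1 - t/c) (by ring)
  have harg : (t/c) • (1/t) + (1 - t/c) • (0:ℝ) = 1/c := by
    simp only [smul_eq_mul, mul_zero, zero_mul, add_zero]
    field_simp
  rw [harg] at key
  simp only [smul_eq_mul] at key
  have := mul_le_mul_of_nonneg_left key hc.le
  have h1 : c * (t/c) = t := by field_simp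
  have hexp : c * (t / c * f (1 / t) + (1 - t / c) * f 0) = t * f (1/t) + (c - t) * f 0 := by
    have h2 : c * (t / c * f (1 / t) + (1 - t / c) * f 0)
        = (c * (t/c)) * f (1/t) + (c - c * (t/c)) * f 0 := by ring
    rw [h2, h1]
  linarith

lemma bdd_above_fdiv {n : ℕ} (f : ℝ → ℝ) (hconv : ConvexOn ℝ (Set.Ici (0:ℝ)) f)
    (K : Matrix (Fin n) (Fin n) ℝ) (c : ℝ) (hc : 0 < c) (hKc : ∀ i j, c ≤ K i j)
    (hKrow : ∀ i, ∑ j, K i j = 1) :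
    BddAbove {u : ℝ | ∃ p : Fin n → ℝ,
      (∀ i, 0 ≤ p i) ∧ ∑ i, p i = 1 ∧ u = fDiv f p (push p K)} := by
  refine ⟨max (max (f 0) (f (1/c))) 0, ?_⟩
  rintro u ⟨p, hp0, hp1, rfl⟩
  have hr : ∀ j, c ≤ push p K j := by
    intro j
    unfold push
    calc c = ∑ i, p i * c := by rw [← Finset.sum_mul, hp1, one_mul]
    _ ≤ ∑ i, p i * K i j :=
      Finset.sum_le_sum fun i _ => mul_le_mul_of_nonneg_left (hKc i j) (hp0 i)
  have hrsum : ∑ j, push p K j = 1 := push_sum p K hp1 hKrow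
  have hterm : ∀ j, push p K j * f (p j / push p K j)
      ≤ push p K j * max (max (f 0) (f (1/c))) 0 := by
    intro j
    have hrj : 0 < push p K j := lt_of_lt_of_le hc (hr j)
    have hpj1 : p j ≤ 1 := by
      rw [← hp1]
      exact Finset.single_le_sum (fun i _ => hp0 i) (Finset.mem_univ j)
    have hx0 : 0 ≤ p j / push p K j := div_nonneg (hp0 j) hrj.le
    have hx1 : p j / push p K j ≤ 1/c := by
      rw [div_le_div_iff₀ hrj hc]
      nlinarith [hr j, hp0 j]
    have hseg : p j / push p K j ∈ segment ℝ (0:ℝ) (1/c) := by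
      rw [segment_eq_Icc (by positivity)]
      exact ⟨hx0, hx1⟩
    have hfx := hconv.le_on_segment (Set.mem_Ici.mpr le_rfl)
      (Set.mem_Ici.mpr (by positivity)) hseg
    exact mul_le_mul_of_nonneg_left
      (le_trans hfx (le_max_left _ _)) hrj.le
  calc fDiv f p (push p K) ≤ ∑ j, push p K j * max (max (f 0) (f (1/c))) 0 :=
        Finset.sum_le_sum fun j _ => hterm j
  _ = max (max (f 0) (f (1/c))) 0 := by rw [← Finset.sum_mul, hrsum, one_mul]

/-- For the uniform prior, the `n`-ary randomized response mechanism is a valid ε-LDP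
mechanism keeping the uniform distribution invariant, its worst-case `f`-divergence equals
`((n-1)/(e^ε+n-1)) f(0) + (e^ε/(e^ε+n-1)) f((e^ε+n-1)/e^ε)`, and this value is the
minimax optimal utility `Γ_f(q_u, ε)`. -/
theorem randomized_response_optimal (n : ℕ) (hn : 2 ≤ n) (ε : ℝ) (hε : 0 ≤ ε)
    (f : ℝ → ℝ) (hconv : ConvexOn ℝ (Set.Ici (0:ℝ)) f) (hf1 : f 1 = 0)
    (KRR : Matrix (Fin n) (Fin n) ℝ)
    (hKRR : KRR = fun i j => if i = j then Real.exp ε / (Real.exp ε + n - 1)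
      else 1 / (Real.exp ε + n - 1)) :
    (∀ i j, 0 ≤ KRR i j) ∧ (∀ i, ∑ j, KRR i j = 1) ∧
    (∀ i j k, KRR i k ≤ Real.exp ε * KRR j k) ∧
    (∀ j, ∑ i, (1 / (n:ℝ)) * KRR i j = 1 / (n:ℝ)) ∧
    IsGreatest
      {v : ℝ | ∃ p : Fin n → ℝ, (∀ i, 0 ≤ p i) ∧ ∑ i, p i = 1 ∧ v = fDiv f p (push p KRR)}
      (((n:ℝ) - 1) / (Real.exp ε + n - 1) * f 0 +
        Real.exp ε / (Real.exp ε + n - 1) * f ((Real.exp ε + n - 1) / Real.exp ε)) ∧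
    sInf {v : ℝ | ∃ K : Matrix (Fin n) (Fin n) ℝ,
        (∀ i j, 0 ≤ K i j) ∧ (∀ i, ∑ j, K i j = 1) ∧
        (∀ i j k, K i k ≤ Real.exp ε * K j k) ∧
        (∀ j, ∑ i, (1 / (n:ℝ)) * K i j = 1 / (n:ℝ)) ∧
        v = sSup {u : ℝ | ∃ p : Fin n → ℝ,
          (∀ i, 0 ≤ p i) ∧ ∑ i, p i = 1 ∧ u = fDiv f p (push p K)}} =
      ((n:ℝ) - 1) / (Real.exp ε + n - 1) * f 0 +
        Real.exp ε / (Real.exp ε + n - 1) * f ((Real.exp ε + n - 1) / Real.exp ε) := by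
  haveI : NeZero n := ⟨by omega⟩
  set a : ℝ := Real.exp ε with ha_def
  have ha1 : 1 ≤ a := Real.one_le_exp hε
  have ha0 : 0 < a := lt_of_lt_of_le one_pos ha1
  have hn2 : (2:ℝ) ≤ (n:ℝ) := by exact_mod_cast hn
  have hD0 : (0:ℝ) < a + n - 1 := by linarith
  set D : ℝ := a + n - 1 with hD_def
  have hK : ∀ i j, KRR i j = if i = j then a / D else 1 / D := by
    intro i j; rw [hKRR]
  have haD : a ≤ D := by rw [hD_def]; linarith
  -- nonnegativity
  have hnn : ∀ i j, 0 ≤ KRR i j := by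
    intro i j; rw [hK]; split_ifs <;> positivity
  -- row sums
  have hrow : ∀ i, ∑ j, KRR i j = 1 := by
    intro i
    have h1 : ∀ j : Fin n, KRR i j = 1/D + (if i = j then (a-1)/D else 0) := by
      intro j; rw [hK]; split_ifs with h <;> ring
    rw [Finset.sum_congr rfl fun j _ => h1 j, Finset.sum_add_distrib,
      Finset.sum_ite_eq univ i, Finset.sum_const, Finset.card_univ, Fintype.card_fin]
    simp only [Finset.mem_univ, if_true, nsmul_eq_mul]
    rw [hD_def]
    have hDne : a + (n:ℝ) - 1 ≠ 0 := ne_of_gt hD0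
    field_simp
    ring
  -- LDP
  have hldp : ∀ i j k, KRR i k ≤ a * KRR j k := by
    intro i j k
    have key1 : 0 ≤ D * (a - 1) := mul_nonneg hD0.le (by linarith)
    have key2 : 0 ≤ D * ((a - 1) * (a - 1)) := mul_nonneg hD0.le (mul_self_nonneg _)
    have key3 : 0 ≤ a * (D * (a - 1)) := mul_nonneg ha0.le key1
    rw [hK, hK]
    split_ifs <;> rw [← mul_div_assoc, div_le_div_iff₀ hD0 hD0] <;> nlinarith
  -- column invariance
  have hcolKRR : ∀ j, ∑ i, (1 / (n:ℝ)) * KRR i j = 1 / (n:ℝ)  := by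
    intro j
    have hsym : ∑ i, KRR i j = 1 := by
      have h1 : ∀ i : Fin n, KRR i j = 1/D + (if i = j then (a-1)/D else 0) := by
        intro i; rw [hK]; split_ifs with h <;> ring
      rw [Finset.sum_congr rfl fun i _ => h1 i, Finset.sum_add_distrib,
        Finset.sum_ite_eq' univ j, Finset.sum_const, Finset.card_univ, Fintype.card_fin]
      simp only [Finset.mem_univ, if_true, nsmul_eq_mul]
      rw [hD_def]
      have hDne : a + (n:ℝ) - 1 ≠ 0 := ne_of_gt hD0
      field_simp
      ring
    rw [← Finset.mul_sum, hsym, mul_one]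
  -- value V
  set V : ℝ := ((n:ℝ) - 1) / D * f 0 + a / D * f (D / a) with hV_def
  -- IsGreatest
  have hpushKRR : ∀ (p : Fin n → ℝ), (∑ i, p i = 1) →
      ∀ j, push p KRR j = ((a-1) * p j + 1) / D := by
    intro p hp1 j
    unfold push
    have h1 : ∀ i : Fin n, p i * KRR i j
        = p i * (1/D) + (if i = j then p i * ((a-1)/D) else 0) := by
      intro i; rw [hK]; split_ifs with h <;> ring
    rw [Finset.sum_congr rfl fun i _ => h1 i, Finset.sum_add_distrib,
      Finset.sum_ite_eq' univ j, ← Finset.sum_mul, hp1]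
    simp only [Finset.mem_univ, if_true]
    field_simp
    ring
  have hgreat : IsGreatest
      {v : ℝ | ∃ p : Fin n → ℝ, (∀ i, 0 ≤ p i) ∧ ∑ i, p i = 1 ∧ v = fDiv f p (push p KRR)} V := by
    constructor
    · -- membership: point mass at 0
      refine ⟨fun i => if i = 0 then 1 else 0,
        fun i => by by_cases h : i = 0 <;> simp [h], by simp, ?_⟩
      rw [fDiv_delta f KRR (hrow 0), hK 0 0, if_pos rfl]
      rw [one_div_div]
      rw [hV_def]
      have h2 : 1 - a / D = ((n:ℝ) - 1) / D := by
        rw [hD_def]; have hDne : a + (n:ℝ) - 1 ≠ 0 := ne_of_gt hD0; field_simp; ring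
      rw [h2]
      ring
    · -- upper bound
      rintro v ⟨p, hp0, hp1, rfl⟩
      have hr_eq := hpushKRR p hp1
      have hM0 : 0 < D / a := by positivity
      have hterm : ∀ j, push p KRR j * f (p j / push p KRR j)
          ≤ (push p KRR j - p j / (D/a)) * f 0 + (p j / (D/a)) * f (D/a) := by
        intro j
        have hpj1 : p j ≤ 1 := by
          rw [← hp1]
          exact Finset.single_le_sum (fun i _ => hp0 i) (Finset.mem_univ j)
        have hrj : 0 < push p KRR j := by
          rw [hr_eq j]
          have : 0 < (a-1) * p j + 1 := by nlinarith [hp0 j]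
          positivity
        have hle : p j / push p KRR j ≤ D / a := by
          rw [div_le_div_iff₀ hrj ha0, hr_eq j]
          have h3 : D * (((a-1) * p j + 1) / D) = (a-1) * p j + 1 := by
            field_simp
          rw [h3]
          nlinarith [hp0 j]
        exact perterm f hconv (D/a) (push p KRR j) (p j) hM0 hrj (hp0 j) hle
      have hrsum : ∑ j, push p KRR j = 1 := push_sum p KRR hp1 hrow
      calc fDiv f p (push p KRR)
          ≤ ∑ j, ((push p KRR j - p j / (D/a)) * f 0 + (p j / (D/a)) * f (D/a)) :=
            Finset.sum_le_sum fun j _ => hterm j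
        _ = V := by
            have h4 : ∀ j, (push p KRR j - p j / (D/a)) * f 0 + (p j / (D/a)) * f (D/a)
                = push p KRR j * f 0 + p j * ((f (D/a) - f 0) / (D/a)) := by
              intro j; ring
            rw [Finset.sum_congr rfl fun j _ => h4 j, Finset.sum_add_distrib,
              ← Finset.sum_mul, ← Finset.sum_mul, hrsum, hp1, one_mul, one_mul]
            rw [hV_def, hD_def]
            have hane : a ≠ 0 := ne_of_gt ha0
            have hDne : a + (n:ℝ) - 1 ≠ 0 := ne_of_gt hD0
            field_simp
            ring
  refine ⟨hnn, hrow, hldp, hcolKRR, hgreat, ?_⟩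
  -- the minimax (sInf) part
  have hVmem : V ∈ {v : ℝ | ∃ K : Matrix (Fin n) (Fin n) ℝ,
      (∀ i j, 0 ≤ K i j) ∧ (∀ i, ∑ j, K i j = 1) ∧
      (∀ i j k, K i k ≤ a * K j k) ∧
      (∀ j, ∑ i, (1 / (n:ℝ)) * K i j = 1 / (n:ℝ)) ∧
      v = sSup {u : ℝ | ∃ p : Fin n → ℝ,
        (∀ i, 0 ≤ p i) ∧ ∑ i, p i = 1 ∧ u = fDiv f p (push p K)}} :=
    ⟨KRR, hnn, hrow, hldp, hcolKRR, (hgreat.csSup_eq).symm⟩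
  have hlb : ∀ v ∈ {v : ℝ | ∃ K : Matrix (Fin n) (Fin n) ℝ,
      (∀ i j, 0 ≤ K i j) ∧ (∀ i, ∑ j, K i j = 1) ∧
      (∀ i j k, K i k ≤ a * K j k) ∧
      (∀ j, ∑ i, (1 / (n:ℝ)) * K i j = 1 / (n:ℝ)) ∧
      v = sSup {u : ℝ | ∃ p : Fin n → ℝ,
        (∀ i, 0 ≤ p i) ∧ ∑ i, p i = 1 ∧ u = fDiv f p (push p K)}}, V ≤ v := by
    rintro v ⟨K, hKnn, hKrow, hKldp, hKcol, rfl⟩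
    have hn0 : (1:ℝ)/(n:ℝ) ≠ 0 := by positivity
    have hcolsum : ∀ j, ∑ i, K i j = 1 := by
      intro j
      have h := hKcol j
      rw [← Finset.mul_sum] at h
      exact mul_left_cancel₀ hn0 (h.trans (mul_one ((1:ℝ)/(n:ℝ))).symm)
    have hna : (0:ℝ) < (n:ℝ) * a := by positivity
    have hKc : ∀ j k, 1/((n:ℝ)*a) ≤ K j k := by
      intro j k
      have h2 : (1:ℝ) ≤ (n:ℝ) * (a * K j k) := by
        calc (1:ℝ) = ∑ i, K i k := (hcolsum k).symm
        _ ≤ ∑ _i : Fin n, a * K j k := Finset.sum_le_sum fun i _ => hKldp i j k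
        _ = (n:ℝ) * (a * K j k) := by
            rw [Finset.sum_const, Finset.card_univ, Fintype.card_fin, nsmul_eq_mul]
      rw [div_le_iff₀ hna]
      nlinarith
    have hKb := bdd_above_fdiv f hconv K (1/((n:ℝ)*a)) (by positivity) hKc hKrow
    have hK000 : 0 < K 0 0 := lt_of_lt_of_le (by positivity) (hKc 0 0)
    have hK00le : K 0 0 ≤ a / D := by
      have h4 : K 0 0 + ∑ i ∈ Finset.univ.erase 0, K i 0 = 1 := by
        rw [Finset.add_sum_erase Finset.univ (fun i => K i 0) (Finset.mem_univ 0)]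
        exact hcolsum 0
      have h3 : ∑ _i ∈ Finset.univ.erase (0 : Fin n), K 0 0
          ≤ ∑ i ∈ Finset.univ.erase (0 : Fin n), a * K i 0 :=
        Finset.sum_le_sum fun i _ => hKldp 0 i 0
      rw [Finset.sum_const, Finset.card_erase_of_mem (Finset.mem_univ 0), Finset.card_univ,
        Fintype.card_fin, ← Finset.mul_sum, nsmul_eq_mul] at h3
      have hcast : ((n - 1 : ℕ) : ℝ) = (n:ℝ) - 1 := by
        have h1n : (1:ℕ) ≤ n := by omega
        push_cast [h1n]
        ring
      rw [hcast] at h3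
      have h5 : ∑ i ∈ Finset.univ.erase (0 : Fin n), K i 0 = 1 - K 0 0 := by linarith
      rw [h5] at h3
      rw [le_div_iff₀ hD0, hD_def]
      nlinarith [h3]
    have hdelta_mem : (K 0 0 * f (1/K 0 0) + (1 - K 0 0) * f 0) ∈
        {u : ℝ | ∃ p : Fin n → ℝ,
          (∀ i, 0 ≤ p i) ∧ ∑ i, p i = 1 ∧ u = fDiv f p (push p K)} :=
      ⟨fun i => if i = 0 then 1 else 0,
        fun i => by by_cases h : i = 0 <;> simp [h], by simp,
        (fDiv_delta f K (hKrow 0)).symm⟩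
    have hVle : V ≤ K 0 0 * f (1/K 0 0) + (1 - K 0 0) * f 0 := by
      have hkey := converse_key f hconv (K 0 0) (a/D) hK000 hK00le
      rw [one_div_div] at hkey
      have h6 : ((n:ℝ)-1)/D = 1 - a/D := by
        rw [hD_def]; have hDne : a + (n:ℝ) - 1 ≠ 0 := ne_of_gt hD0; field_simp; ring
      rw [hV_def, h6]
      linarith
    exact le_trans hVle (le_csSup hKb hdelta_mem)
  exact le_antisymm (csInf_le ⟨V, fun v hv => hlb v hv⟩ hVmem) (le_csInf ⟨V, hVmem⟩ hlb)
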